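/- The gradient of the bearing cost d·f_b(c) with respect to x_j equals f_b(c)β + f_b'(c)(I - ββᵀ)β_g, where d = ‖x_j - x_i‖, β = (x_j - x_i)/d, c = ⟪β_g, β⟫, for x_i ≠ x_j and f_b continuously differentiable. -/

import Mathlib

open scoped RealInnerProductSpace

lemma hasFDerivAt_norm_ne_zero {n : ℕ} (x : EuclideanSpace ℝ (Fin n)) (hx : x ≠ 0) :
    HasFDerivAt (fun y : EuclideanSpace ℝ (Fin n) => ‖y‖) (innerSL ℝ (‖x‖⁻¹ • x)) x := by
  have hpos : (0:ℝ) < ‖x‖ := norm_pos_iff.mpr hx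
  have h1 : HasFDerivAt (fun y : EuclideanSpace ℝ (Fin n) => ‖y‖ ^ 2)
      (2 • (innerSL ℝ x)) x := (hasStrictFDerivAt_norm_sq x).hasFDerivAt
  have h2 : (‖x‖^2 : ℝ) ≠ 0 := by positivity
  have h3 := (Real.hasDerivAt_sqrt h2).comp_hasFDerivAt x h1
  simp only [Function.comp_def] at h3
  have heq : (fun y : EuclideanSpace ℝ (Fin n) => Real.sqrt (‖y‖ ^ 2)) =
      fun y => ‖y‖ := by
    funext y; exact Real.sqrt_sq (norm_nonneg y)
  rw [heq] at h3
  convert h3 using 1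
  iterate 3 rfl
  ext y
  simp only [ContinuousLinearMap.coe_smul', Pi.smul_apply, innerSL_apply_apply,
    real_inner_smul_left, smul_eq_mul]
  rw [Real.sqrt_sq hpos.le]
  ring

theorem bearing_cost_gradient {n : ℕ} (fb : ℝ → ℝ) (hfb : ContDiff ℝ 1 fb)
    (βg : EuclideanSpace ℝ (Fin n)) (hβg : ‖βg‖ = 1)
    (xi xj : EuclideanSpace ℝ (Fin n)) (h : xi ≠ xj) :
    HasGradientAt
      (fun y : EuclideanSpace ℝ (Fin n) =>
        ‖y - xi‖ * fb ⟪βg, ‖y - xi‖⁻¹ • (y - xi)⟫)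
      (fb ⟪βg, ‖xj - xi‖⁻¹ • (xj - xi)⟫ • (‖xj - xi‖⁻¹ • (xj - xi)) +
        deriv fb ⟪βg, ‖xj - xi‖⁻¹ • (xj - xi)⟫ •
          (βg - ⟪βg, ‖xj - xi‖⁻¹ • (xj - xi)⟫ • (‖xj - xi‖⁻¹ • (xj - xi))))
      xj := by
  have hv : xj - xi ≠ 0 := sub_ne_zero.mpr (Ne.symm h)
  set d : ℝ := ‖xj - xi‖ with hddef
  have hd : d ≠ 0 := norm_ne_zero_iff.mpr hv
  have hdpos : (0:ℝ) < d := norm_pos_iff.mpr hv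
  set β : EuclideanSpace ℝ (Fin n) := d⁻¹ • (xj - xi) with hβdef
  set c : ℝ := ⟪βg, β⟫ with hcdef
  -- derivative of y ↦ y - xi
  have hsub : HasFDerivAt (fun y : EuclideanSpace ℝ (Fin n) => y - xi)
      (ContinuousLinearMap.id ℝ (EuclideanSpace ℝ (Fin n))) xj := by
    simpa using (hasFDerivAt_id xj).sub_const xi
  -- derivative of y ↦ ‖y - xi‖
  have hF1 : HasFDerivAt (fun y : EuclideanSpace ℝ (Fin n) => ‖y - xi‖)
      (innerSL ℝ β) xj := by
    have h0 := (hasFDerivAt_norm_ne_zero (xj - xi) hv).comp xj hsub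
    simp only [Function.comp_def, ContinuousLinearMap.comp_id] at h0
    convert h0 using 2
  -- derivative of y ↦ ⟪βg, y - xi⟫
  have hF2 : HasFDerivAt (fun y : EuclideanSpace ℝ (Fin n) => ⟪βg, y - xi⟫)
      (innerSL ℝ βg) xj := by
    have h0 := ((innerSL ℝ βg).hasFDerivAt (x := xj - xi)).comp xj hsub
    simpa [Function.comp_def] using h0
  -- derivative of y ↦ ‖y - xi‖⁻¹
  have hinv : HasFDerivAt (fun y : EuclideanSpace ℝ (Fin n) => ‖y - xi‖⁻¹)
      (-(d ^ 2)⁻¹ • innerSL ℝ β) xj := by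
    have h0 := (hasDerivAt_inv hd).comp_hasFDerivAt xj hF1
    simpa [Function.comp_def] using h0
  -- derivative of q : y ↦ ‖y - xi‖⁻¹ * ⟪βg, y - xi⟫
  have hq : HasFDerivAt (fun y : EuclideanSpace ℝ (Fin n) => ‖y - xi‖⁻¹ * ⟪βg, y - xi⟫)
      (d⁻¹ • innerSL ℝ βg + ⟪βg, xj - xi⟫ • (-(d ^ 2)⁻¹ • innerSL ℝ β)) xj := by
    have h0 := hinv.mul hF2
    convert h0 using 2
    all_goals rfl
  have hcval : ‖xj - xi‖⁻¹ * ⟪βg, xj - xi⟫ = c := by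
    rw [hcdef, hβdef, real_inner_smul_right]
  have hfb' : HasDerivAt fb (deriv fb c) (‖xj - xi‖⁻¹ * ⟪βg, xj - xi⟫) := by
    rw [hcval]; exact ((hfb.differentiable one_ne_zero) c).hasDerivAt
  have hcomp : HasFDerivAt
      (fun y : EuclideanSpace ℝ (Fin n) => fb (‖y - xi‖⁻¹ * ⟪βg, y - xi⟫))
      (deriv fb c • (d⁻¹ • innerSL ℝ βg + ⟪βg, xj - xi⟫ • (-(d ^ 2)⁻¹ • innerSL ℝ β)))
      xj := by
    have h0 := hfb'.comp_hasFDerivAt xj hq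
    simpa [Function.comp_def] using h0
  have hmul := hF1.mul hcomp
  -- rewrite the goal function
  have hfun : (fun y : EuclideanSpace ℝ (Fin n) =>
      ‖y - xi‖ * fb ⟪βg, ‖y - xi‖⁻¹ • (y - xi)⟫) =
      (fun y : EuclideanSpace ℝ (Fin n) => ‖y - xi‖ * fb (‖y - xi‖⁻¹ * ⟪βg, y - xi⟫)) := by
    funext y
    rw [real_inner_smul_right]
  rw [hasGradientAt_iff_hasFDerivAt, hfun]
  have hEq : (InnerProductSpace.toDual ℝ (EuclideanSpace ℝ (Fin n)))
      (fb c • β + deriv fb c • (βg - c • β)) =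
      ‖xj - xi‖ • deriv fb c •
          (d⁻¹ • innerSL ℝ βg + ⟪βg, xj - xi⟫ • (-(d ^ 2)⁻¹ • innerSL ℝ β)) +
        fb (‖xj - xi‖⁻¹ * ⟪βg, xj - xi⟫) • innerSL ℝ β := by
    ext y
    simp only [InnerProductSpace.toDual_apply_apply, hcval]
    simp only [ContinuousLinearMap.add_apply, ContinuousLinearMap.coe_smul',
      Pi.smul_apply, innerSL_apply_apply, smul_eq_mul, ContinuousLinearMap.neg_apply,
      Pi.neg_apply]
    simp only [inner_add_left, inner_sub_left, real_inner_smul_left]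
    have hc2 : c = d⁻¹ * ⟪βg, xj - xi⟫ := by rw [hcdef, hβdef, real_inner_smul_right]
    have hs : ⟪βg, xj - xi⟫ = d * c := by rw [hc2]; field_simp
    rw [hs]
    generalize ⟪β, y⟫ = p
    generalize ⟪βg, y⟫ = q
    generalize fb c = A
    generalize deriv fb c = B
    field_simp
    ring
  rw [show fb c • β + deriv fb c • (βg - c • β) =
      fb ⟪βg, β⟫ • β + deriv fb ⟪βg, β⟫ • (βg - ⟪βg, β⟫ • β) from by rw [← hcdef]] at hEq
  rw [hEq]
  exact hmul
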